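/- arXiv:2508.14353 — 2 statements merged into one kernel-verified Lean document; each statement's English description precedes it below -/
import Mathlib

section
/- Let f ∈ C[x1,...,xs] be weighted homogeneous of degree d with respect to positive weights w1 ≥ ... ≥ ws with d ≥ 2w1, having an isolated singularity. Let S be any set of weighted homogeneous polynomials each of weighted degree at least d. Then the graded algebra A = C[x1,...,xs]/⟨f, S⟩ admits no nonzero weighted homogeneous C-linear derivation of negative weighted degree. -/
namespace NegDeriv


variable {R : Type*} [CommRing R]

section AssFinite

variable {M : Type*} [AddCommGroup M] [Module R M]

theorem colon_eq_ann (x : M) :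
    (⊥ : Submodule R M).colon {x} = (Submodule.span R {x}).annihilator := by
  ext t
  rw [Submodule.mem_colon_singleton, Submodule.mem_bot, Submodule.mem_annihilator_span_singleton]

theorem ass_mem_iff [IsNoetherianRing R] {p : Ideal R} :
    p ∈ associatedPrimes R M ↔ p.IsPrime ∧ ∃ x : M, p = (Submodule.span R {x}).annihilator := by
  rw [AssociatedPrimes.mem_iff, isAssociatedPrime_iff]
  simp only [colon_eq_ann]

theorem ass_subset [IsNoetherianRing R] (N : Submodule R M) :
    associatedPrimes R M ⊆ associatedPrimes R N ∪ associatedPrimes R (M ⧸ N) := by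
  rintro p hp
  obtain ⟨hpr, x, hx⟩ := ass_mem_iff.mp hp
  by_cases h : Submodule.span R {x} ⊓ N = ⊥
  · right
    refine ass_mem_iff.mpr ⟨hpr, N.mkQ x, ?_⟩
    ext t
    rw [hx, Submodule.mem_annihilator_span_singleton,
      Submodule.mem_annihilator_span_singleton]
    constructor
    · intro ht
      rw [← map_smul, ht, map_zero]
    · intro ht
      have h1 : t • x ∈ N := by
        rwa [← Submodule.Quotient.mk_eq_zero, ← Submodule.mkQ_apply, map_smul]
      have h2 : t • x ∈ Submodule.span R {x} :=
        Submodule.smul_mem _ _ (Submodule.mem_span_singleton_self x)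
      have : t • x ∈ Submodule.span R {x} ⊓ N := ⟨h2, h1⟩
      rw [h, Submodule.mem_bot] at this
      exact this
  · left
    obtain ⟨y, hy, hy0⟩ := Submodule.exists_mem_ne_zero_of_ne_bot h
    obtain ⟨hy1, hy2⟩ := Submodule.mem_inf.mp hy
    obtain ⟨c, rfl⟩ := Submodule.mem_span_singleton.mp hy1
    refine ass_mem_iff.mpr ⟨hpr, ⟨c • x, hy2⟩, ?_⟩
    ext t
    rw [hx, Submodule.mem_annihilator_span_singleton,
      Submodule.mem_annihilator_span_singleton]
    have hcoe : ∀ z : M, ∀ hz : z ∈ N, t • (⟨z, hz⟩ : N) = 0 ↔ t • z = 0 := by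
      intro z hz
      rw [Subtype.ext_iff]
      rfl
    rw [hcoe]
    constructor
    · intro ht
      rw [smul_comm, ht, smul_zero]
    · intro ht
      have htc : (t * c) • x = 0 := by rw [mul_smul]; exact ht
      have : t * c ∈ p := by
        rw [hx, Submodule.mem_annihilator_span_singleton]; exact htc
      rcases hpr.mem_or_mem this with h1 | h1
      · rw [hx, Submodule.mem_annihilator_span_singleton] at h1; exact h1
      · exfalso
        rw [hx, Submodule.mem_annihilator_span_singleton] at h1
        exact hy0 h1

theorem ass_cyclic [IsNoetherianRing R] {x : M} (hp : ((Submodule.span R {x}).annihilator).IsPrime) :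
    associatedPrimes R ↥(Submodule.span R {x}) ⊆ {(Submodule.span R {x}).annihilator} := by
  rintro q hq
  obtain ⟨hqr, z, hz⟩ := ass_mem_iff.mp hq
  obtain ⟨c, hc⟩ := Submodule.mem_span_singleton.mp z.2
  have hz0 : (z : M) ≠ 0 := by
    intro h0
    have : z = 0 := Subtype.ext h0
    rw [this, Submodule.span_zero_singleton, Submodule.annihilator_bot] at hz
    exact hqr.ne_top hz
  have key : ∀ t : R, t ∈ q ↔ (t * c) • x = 0 := by
    intro t
    rw [hz, Submodule.mem_annihilator_span_singleton]
    have : ∀ w : ↥(Submodule.span R {x}), t • w = 0 ↔ t • (w : M) = 0 := by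
      intro w; rw [Subtype.ext_iff]; rfl
    rw [this, ← hc, mul_smul]
  have hcp : c ∉ (Submodule.span R {x}).annihilator := by
    rw [Submodule.mem_annihilator_span_singleton]
    intro h0; rw [hc] at h0; exact hz0 h0
  simp only [Set.mem_singleton_iff]
  ext t
  rw [key, ← Submodule.mem_annihilator_span_singleton x (t * c)]
  constructor
  · intro h
    rcases hp.mem_or_mem h with h1 | h1
    · exact h1
    · exact absurd h1 hcp
  · intro h
    exact Ideal.mul_mem_right _ _ h

variable [IsNoetherianRing R]

theorem ass_finite [Module.Finite R M] : (associatedPrimes R M).Finite := by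
  have : IsNoetherian R M := isNoetherian_of_isNoetherianRing_of_finite R M
  have main : ∀ N : Submodule R M, (associatedPrimes R (M ⧸ N)).Finite := by
    intro N
    induction N using IsNoetherian.induction with
    | _ N IH =>
      by_cases hN : N = ⊤
      · subst hN
        have : Subsingleton (M ⧸ (⊤ : Submodule R M)) :=
          Submodule.Quotient.subsingleton_iff.mpr rfl
        rw [associatedPrimes.eq_empty_of_subsingleton]
        exact Set.finite_empty
      · have : Nontrivial (M ⧸ N) :=
          (Submodule.Quotient.nontrivial_iff (p := N)).mpr hN
        obtain ⟨p, hp⟩ := associatedPrimes.nonempty R (M ⧸ N)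
        obtain ⟨hpr, xb, hx⟩ := ass_mem_iff.mp hp
        obtain ⟨x, rfl⟩ := Submodule.mkQ_surjective N xb
        have hxN : x ∉ N := by
          intro hxN
          have : N.mkQ x = 0 := by
            rwa [Submodule.mkQ_apply, Submodule.Quotient.mk_eq_zero]
          rw [this, Submodule.span_zero_singleton, Submodule.annihilator_bot] at hx
          exact hpr.ne_top hx
        set J : Submodule R M := N ⊔ Submodule.span R {x} with hJ
        have hNJ : N < J := by
          refine lt_of_le_of_ne le_sup_left ?_
          intro hEq
          exact hxN (hEq ▸ Submodule.mem_sup_right (Submodule.mem_span_singleton_self x))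
        have hfin : (associatedPrimes R (M ⧸ J)).Finite := IH J hNJ
        have hmap : J.map N.mkQ = Submodule.span R {N.mkQ x} := by
          rw [hJ, Submodule.map_sup, Submodule.map_span, Set.image_singleton]
          have : N.map N.mkQ = ⊥ := by
            ext y
            simp only [Submodule.mem_map, Submodule.mem_bot]
            constructor
            · rintro ⟨z, hz, rfl⟩
              rw [Submodule.mkQ_apply, Submodule.Quotient.mk_eq_zero]; exact hz
            · rintro rfl; exact ⟨0, N.zero_mem, map_zero _⟩
          rw [this, bot_sup_eq]
        have e : ((M ⧸ N) ⧸ (Submodule.span R {N.mkQ x})) ≃ₗ[R] M ⧸ J := by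
          rw [← hmap]
          exact Submodule.quotientQuotientEquivQuotient N J le_sup_left
        have hsub := ass_subset (M := M ⧸ N) (Submodule.span R {N.mkQ x})
        have h1 : associatedPrimes R ↥(Submodule.span R {N.mkQ x}) ⊆ {p} := by
          have := ass_cyclic (x := N.mkQ x) (M := M ⧸ N) (hx ▸ hpr)
          rw [← hx] at this
          exact this
        have h2 : associatedPrimes R ((M ⧸ N) ⧸ (Submodule.span R {N.mkQ x}))
            = associatedPrimes R (M ⧸ J) := LinearEquiv.AssociatedPrimes.eq e
        refine Set.Finite.subset (Set.Finite.union (Set.finite_singleton p) hfin) ?_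
        intro q hq
        rcases hsub hq with h | h
        · exact Or.inl (h1 h)
        · exact Or.inr (h2 ▸ h)
  have e0 : (M ⧸ (⊥ : Submodule R M)) ≃ₗ[R] M := Submodule.quotEquivOfEqBot ⊥ rfl
  have := main ⊥
  rwa [LinearEquiv.AssociatedPrimes.eq e0] at this

end AssFinite





/-- `r` is a non-zero-divisor on `R ⧸ K`. -/
def NZDI (r : R) (K : Ideal R) : Prop := ∀ u, r * u ∈ K → u ∈ K

/-- regular sequence on `R ⧸ K`, in ideal language. -/
def SeqReg : List R → Ideal R → Prop
  | [], _ => True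
  | a :: l, K => NZDI a K ∧ SeqReg l (K ⊔ Ideal.span {a})

theorem mem_ann_iff (K : Ideal R) (v t : R) :
    t ∈ (Submodule.span R {Ideal.Quotient.mk K v}).annihilator ↔ t * v ∈ K := by
  rw [Submodule.mem_annihilator_span_singleton, Algebra.smul_def,
    Ideal.Quotient.algebraMap_eq, ← map_mul, Ideal.Quotient.eq_zero_iff_mem]

theorem exists_ass_of_not_nzdi [IsNoetherianRing R] {r : R} {K : Ideal R} (h : ¬ NZDI r K) :
    ∃ p ∈ associatedPrimes R (R ⧸ K), r ∈ p := by
  rw [NZDI] at h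
  push_neg at h
  obtain ⟨u, hu1, hu2⟩ := h
  have hx : Ideal.Quotient.mk K u ≠ 0 := by rwa [Ne, Ideal.Quotient.eq_zero_iff_mem]
  obtain ⟨p, hp, hle⟩ := exists_le_isAssociatedPrime_of_isNoetherianRing R _ hx
  exact ⟨p, hp, hle (by rw [colon_eq_ann]; exact (mem_ann_iff K u r).mpr hu1)⟩

theorem nzdi_notMem_ass [IsNoetherianRing R] {r : R} {K : Ideal R} (h : NZDI r K) {p : Ideal R}
    (hp : p ∈ associatedPrimes R (R ⧸ K)) : r ∉ p := by
  obtain ⟨hpr, x, hx⟩ := ass_mem_iff.mp hp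
  obtain ⟨v, rfl⟩ := Ideal.Quotient.mk_surjective x
  intro hrp
  have hv : v ∉ K := by
    intro hv
    have h0 : Ideal.Quotient.mk K v = 0 := Ideal.Quotient.eq_zero_iff_mem.mpr hv
    rw [h0, Submodule.span_zero_singleton, Submodule.annihilator_bot] at hx
    exact hpr.ne_top hx
  exact hv (h v ((mem_ann_iff K v r).mp (hx ▸ hrp)))

theorem nzdi_of_forall_notMem {r : R} {K : Ideal R} [IsNoetherianRing R]
    (h : ∀ p ∈ associatedPrimes R (R ⧸ K), r ∉ p) : NZDI r K := by
  by_contra hc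
  obtain ⟨p, hp, hrp⟩ := exists_ass_of_not_nzdi hc
  exact h p hp hrp

theorem ass_finite' [IsNoetherianRing R] (K : Ideal R) :
    (associatedPrimes R (R ⧸ K)).Finite := by
  haveI : Module.Finite R (R ⧸ K) :=
    Module.Finite.of_surjective (K.mkQ) (Submodule.mkQ_surjective K)
  exact ass_finite

theorem avoid [IsNoetherianRing R] (I : Ideal R) (Ks : List (Ideal R))
    (H : ∀ K ∈ Ks, ∀ p ∈ associatedPrimes R (R ⧸ K), ¬ I ≤ p) :
    ∃ c ∈ I, ∀ K ∈ Ks, NZDI c K := by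
  classical
  have hfin : (⋃ K ∈ Ks, associatedPrimes R (R ⧸ K)).Finite := by
    refine Set.Finite.biUnion (List.finite_toSet Ks) fun K _ => ass_finite' K
  by_contra hc
  push_neg at hc
  have hsub : (I : Set R) ⊆ ⋃ p ∈ (hfin.toFinset : Set (Ideal R)), (p : Set R) := by
    intro c hcI
    obtain ⟨K, hK, hnz⟩ := hc c hcI
    obtain ⟨p, hp, hrp⟩ := exists_ass_of_not_nzdi hnz
    refine Set.mem_biUnion ?_ hrp
    refine Finset.mem_coe.mpr (hfin.mem_toFinset.mpr ?_)
    exact Set.mem_biUnion hK hp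
  have hprime : ∀ p ∈ hfin.toFinset, p ≠ ⊤ → p ≠ ⊤ → p.IsPrime := by
    intro p hp _ _
    obtain ⟨K, _, hpK⟩ := Set.mem_iUnion₂.mp (hfin.mem_toFinset.mp hp)
    exact hpK.isPrime
  rw [Ideal.subset_union_prime ⊤ ⊤ hprime] at hsub
  obtain ⟨p, hp, hIp⟩ := hsub
  obtain ⟨K, hK, hpK⟩ := Set.mem_iUnion₂.mp (hfin.mem_toFinset.mp hp)
  exact H K hK p hpK hIp

theorem nzdi_swap {a c : R} {K : Ideal R} (ha : NZDI a K)
    (hc2 : NZDI c (K ⊔ Ideal.span {a})) :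
    NZDI a (K ⊔ Ideal.span {c}) := by
  intro u hu
  obtain ⟨k, hk, y, hy, hky⟩ := Submodule.mem_sup.mp hu
  obtain ⟨t, rfl⟩ := Ideal.mem_span_singleton'.mp hy
  have h1 : c * t ∈ K ⊔ Ideal.span {a} := by
    have e : c * t = a * u - k := by linear_combination hky
    rw [e]
    exact sub_mem (Submodule.mem_sup_right (Ideal.mem_span_singleton'.mpr ⟨u, mul_comm u a⟩))
      (Submodule.mem_sup_left hk)
  obtain ⟨k', hk', z, hz, hkz⟩ := Submodule.mem_sup.mp (hc2 t h1)
  obtain ⟨s, rfl⟩ := Ideal.mem_span_singleton'.mp hz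
  have h3 : a * (u - s * c) ∈ K := by
    have e : a * (u - s * c) = k + k' * c := by linear_combination -hky - c * hkz
    rw [e]
    exact add_mem hk (Ideal.mul_mem_right _ _ hk')
  have h4 := ha _ h3
  have e2 : u = (u - s * c) + s * c := by ring
  rw [e2]
  exact add_mem (Submodule.mem_sup_left h4)
    (Submodule.mem_sup_right (Ideal.mem_span_singleton'.mpr ⟨s, rfl⟩))

theorem lemma1 [IsNoetherianRing R] {I K : Ideal R} {a₁ a₂ b : R}
    (ha₁I : a₁ ∈ I) (ha₂I : a₂ ∈ I)
    (ha₁ : NZDI a₁ K) (ha₂ : NZDI a₂ (K ⊔ Ideal.span {a₁}))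
    (hb : NZDI b K) :
    ∀ p ∈ associatedPrimes R (R ⧸ (K ⊔ Ideal.span {b})), ¬ I ≤ p := by
  rintro p hp hIp
  obtain ⟨hpr, x, hx⟩ := ass_mem_iff.mp hp
  obtain ⟨v, rfl⟩ := Ideal.Quotient.mk_surjective x
  have hv : v ∉ K ⊔ Ideal.span {b} := by
    intro hv
    have h0 : Ideal.Quotient.mk _ v = 0 := Ideal.Quotient.eq_zero_iff_mem.mpr hv
    rw [h0, Submodule.span_zero_singleton, Submodule.annihilator_bot] at hx
    exact hpr.ne_top hx
  have hmem : ∀ t ∈ I, t * v ∈ K ⊔ Ideal.span {b} := fun t ht =>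
    (mem_ann_iff _ v t).mp (hx ▸ hIp ht)
  obtain ⟨k₁, hk₁, y₁, hy₁, he₁⟩ := Submodule.mem_sup.mp (hmem a₁ ha₁I)
  obtain ⟨v₁, rfl⟩ := Ideal.mem_span_singleton'.mp hy₁
  obtain ⟨k₂, hk₂, y₂, hy₂, he₂⟩ := Submodule.mem_sup.mp (hmem a₂ ha₂I)
  obtain ⟨v₂, rfl⟩ := Ideal.mem_span_singleton'.mp hy₂
  have h1 : b * (a₁ * v₂ - a₂ * v₁) ∈ K := by
    have e : b * (a₁ * v₂ - a₂ * v₁) = a₂ * k₁ - a₁ * k₂ := by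
      linear_combination a₁ * he₂ - a₂ * he₁
    rw [e]
    exact sub_mem (Ideal.mul_mem_left _ _ hk₁) (Ideal.mul_mem_left _ _ hk₂)
  have h2 : a₁ * v₂ - a₂ * v₁ ∈ K := hb _ h1
  have h3 : a₂ * v₁ ∈ K ⊔ Ideal.span {a₁} := by
    have e : a₂ * v₁ = a₁ * v₂ - (a₁ * v₂ - a₂ * v₁) := by ring
    rw [e]
    exact sub_mem (Submodule.mem_sup_right (Ideal.mem_span_singleton'.mpr ⟨v₂, mul_comm v₂ a₁⟩))
      (Submodule.mem_sup_left h2)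
  obtain ⟨k₃, hk₃, y₃, hy₃, he₃⟩ := Submodule.mem_sup.mp (ha₂ _ h3)
  obtain ⟨s, rfl⟩ := Ideal.mem_span_singleton'.mp hy₃
  have h5 : a₁ * (v - s * b) ∈ K := by
    have e : a₁ * (v - s * b) = k₁ + k₃ * b := by linear_combination -he₁ - b * he₃
    rw [e]
    exact add_mem hk₁ (Ideal.mul_mem_right _ _ hk₃)
  have h6 := ha₁ _ h5
  apply hv
  have e2 : v = (v - s * b) + s * b := by ring
  rw [e2]
  exact add_mem (Submodule.mem_sup_left h6)
    (Submodule.mem_sup_right (Ideal.mem_span_singleton'.mpr ⟨s, rfl⟩))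

theorem exchange [IsNoetherianRing R] {I : Ideal R} :
    ∀ (n : ℕ) (K : Ideal R) (a : R) (l : List R), l.length = n →
    SeqReg (a :: l) K → (∀ x ∈ a :: l, x ∈ I) → ∀ b ∈ I, NZDI b K →
    ∃ l', l'.length = n ∧ (∀ x ∈ l', x ∈ I) ∧ SeqReg l' (K ⊔ Ideal.span {b}) := by
  intro n
  induction n with
  | zero =>
    intro K a l hl _ _ b _ _
    exact ⟨[], rfl, by simp, trivial⟩
  | succ m IH =>
    intro K a l hl hreg hmem b hbI hb
    obtain ⟨a₂, l₂, rfl⟩ : ∃ a₂ l₂, l = a₂ :: l₂ := by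
      cases l with
      | nil => simp at hl
      | cons x xs => exact ⟨x, xs, rfl⟩
    obtain ⟨ha, ha₂, hrest⟩ : NZDI a K ∧ NZDI a₂ (K ⊔ Ideal.span {a}) ∧
        SeqReg l₂ (K ⊔ Ideal.span {a} ⊔ Ideal.span {a₂}) := ⟨hreg.1, hreg.2.1, hreg.2.2⟩
    have haI : a ∈ I := hmem a (by simp)
    have ha₂I : a₂ ∈ I := hmem a₂ (by simp)
    obtain ⟨c, hcI, hc⟩ := avoid I [K, K ⊔ Ideal.span {a}, K ⊔ Ideal.span {b}] (by
      intro K' hK'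
      simp only [List.mem_cons, List.not_mem_nil, or_false] at hK'
      rcases hK' with rfl | rfl | rfl
      · intro p hp hIp
        exact nzdi_notMem_ass hb hp (hIp hbI)
      · intro p hp hIp
        exact nzdi_notMem_ass ha₂ hp (hIp ha₂I)
      · exact lemma1 haI ha₂I ha ha₂ hb)
    have hcK : NZDI c K := hc _ (by simp)
    have hcKa : NZDI c (K ⊔ Ideal.span {a}) := hc _ (by simp)
    have hcKb : NZDI c (K ⊔ Ideal.span {b}) := hc _ (by simp)
    have haKc : NZDI a (K ⊔ Ideal.span {c}) := nzdi_swap ha hcKa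
    obtain ⟨g, hg_len, hgI, hg⟩ := IH (K ⊔ Ideal.span {a}) a₂ l₂ (by simpa using hl)
      ⟨ha₂, hrest⟩ (fun x hx => hmem x (List.mem_cons_of_mem a hx)) c hcI hcKa
    have hg' : SeqReg g (K ⊔ Ideal.span {c} ⊔ Ideal.span {a}) := by
      rwa [sup_right_comm] at hg
    have hbKc : NZDI b (K ⊔ Ideal.span {c}) := nzdi_swap hb hcKb
    obtain ⟨h, hh_len, hhI, hh⟩ := IH (K ⊔ Ideal.span {c}) a g hg_len ⟨haKc, hg'⟩
      (by
        intro x hx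
        rcases List.mem_cons.mp hx with rfl | hx
        · exact haI
        · exact hgI x hx) b hbI hbKc
    have hh' : SeqReg h (K ⊔ Ideal.span {b} ⊔ Ideal.span {c}) := by
      rwa [sup_right_comm] at hh
    exact ⟨c :: h, by simp [hh_len], (by
      intro x hx
      rcases List.mem_cons.mp hx with rfl | hx
      · exact hcI
      · exact hhI x hx), ⟨hcKb, hh'⟩⟩


theorem seqReg_cons {a : R} {l : List R} {K : Ideal R} :
    SeqReg (a :: l) K ↔ NZDI a K ∧ SeqReg l (K ⊔ Ideal.span {a}) := Iff.rfl

def spanL (l : List R) : Ideal R := Ideal.span {x | x ∈ l}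

theorem spanL_nil : spanL ([] : List R) = ⊥ := by
  have : {x : R | x ∈ ([] : List R)} = ∅ := by ext x; simp
  rw [spanL, this, Ideal.span_empty]

theorem spanL_cons (a : R) (l : List R) : spanL (a :: l) = Ideal.span {a} ⊔ spanL l := by
  have : {x : R | x ∈ a :: l} = insert a {x | x ∈ l} := by ext x; simp
  rw [spanL, this, Ideal.span_insert, spanL]

theorem spanL_singleton (a : R) : spanL [a] = Ideal.span {a} := by
  rw [spanL_cons, spanL_nil, sup_bot_eq]


theorem spanL_append (l₁ l₂ : List R) : spanL (l₁ ++ l₂) = spanL l₁ ⊔ spanL l₂ := by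
  have : {x : R | x ∈ l₁ ++ l₂} = {x | x ∈ l₁} ∪ {x | x ∈ l₂} := by ext x; simp
  rw [spanL, this, Ideal.span_union, spanL, spanL]

theorem seqReg_append (l₁ l₂ : List R) (K : Ideal R) :
    SeqReg (l₁ ++ l₂) K ↔ SeqReg l₁ K ∧ SeqReg l₂ (K ⊔ spanL l₁) := by
  induction l₁ generalizing K with
  | nil => simp only [List.nil_append, spanL_nil, sup_bot_eq]; exact ⟨fun h => ⟨trivial, h⟩, fun h => h.2⟩
  | cons a l₁ IH =>
    rw [List.cons_append, seqReg_cons, seqReg_cons, IH, spanL_cons, and_assoc, ← sup_assoc]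

theorem syzygyF : ∀ (n : ℕ) (θ : Fin n → R) (K : Ideal R), SeqReg (List.ofFn θ) K →
    ∀ (c : Fin n → R), (∑ i, c i * θ i) ∈ K → ∀ i, c i ∈ K ⊔ Ideal.span (Set.range θ) := by
  intro n
  induction n with
  | zero => intro θ K _ c _ i; exact i.elim0
  | succ m IH =>
    intro θ K hreg c hsum i
    have hofn : List.ofFn θ = (List.ofFn (θ ∘ Fin.castSucc)) ++ [θ (Fin.last m)] := by
      rw [List.ofFn_succ', List.concat_eq_append]; rfl
    rw [hofn, seqReg_append] at hreg
    obtain ⟨hreg0, hrega⟩ := hreg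
    have hspan0 : spanL (List.ofFn (θ ∘ Fin.castSucc)) = Ideal.span (Set.range (θ ∘ Fin.castSucc)) := by
      rw [spanL]
      congr 1
      ext x
      simp [List.mem_ofFn]
    have hNZ : NZDI (θ (Fin.last m)) (K ⊔ Ideal.span (Set.range (θ ∘ Fin.castSucc))) := by
      have := hrega.1
      rwa [hspan0] at this
    have hsum' : (∑ j : Fin m, c (Fin.castSucc j) * θ (Fin.castSucc j))
        + c (Fin.last m) * θ (Fin.last m) ∈ K := by
      rw [← Fin.sum_univ_castSucc (f := fun i => c i * θ i)]
      exact hsum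
    have hS1 : (∑ j : Fin m, c (Fin.castSucc j) * θ (Fin.castSucc j))
        ∈ Ideal.span (Set.range (θ ∘ Fin.castSucc)) :=
      Ideal.sum_mem _ fun j _ => Ideal.mul_mem_left _ _ (Ideal.subset_span ⟨j, rfl⟩)
    have hau : θ (Fin.last m) * c (Fin.last m) ∈ K ⊔ Ideal.span (Set.range (θ ∘ Fin.castSucc)) := by
      have e : θ (Fin.last m) * c (Fin.last m) =
          ((∑ j : Fin m, c (Fin.castSucc j) * θ (Fin.castSucc j)) + c (Fin.last m) * θ (Fin.last m))
          - (∑ j : Fin m, c (Fin.castSucc j) * θ (Fin.castSucc j)) := by ring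
      rw [e]
      exact sub_mem (Submodule.mem_sup_left hsum') (Submodule.mem_sup_right hS1)
    have hu := hNZ _ hau
    obtain ⟨k', hk', w, hw, hkw⟩ := Submodule.mem_sup.mp hu
    obtain ⟨r, hr⟩ := (Ideal.mem_span_range_iff_exists_fun).mp hw
    have hsum'' : (∑ j : Fin m, (c (Fin.castSucc j) + r j * θ (Fin.last m)) * θ (Fin.castSucc j)) ∈ K := by
      have e : (∑ j : Fin m, (c (Fin.castSucc j) + r j * θ (Fin.last m)) * θ (Fin.castSucc j))
          = (∑ j : Fin m, c (Fin.castSucc j) * θ (Fin.castSucc j))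
            + (∑ j : Fin m, r j * θ (Fin.castSucc j)) * θ (Fin.last m) := by
        rw [Finset.sum_mul, ← Finset.sum_add_distrib]
        exact Finset.sum_congr rfl fun j _ => by ring
      rw [e, show (∑ j : Fin m, r j * θ (Fin.castSucc j)) = w from hr]
      have e2 : (∑ j : Fin m, c (Fin.castSucc j) * θ (Fin.castSucc j)) + w * θ (Fin.last m)
          = ((∑ j : Fin m, c (Fin.castSucc j) * θ (Fin.castSucc j))
            + c (Fin.last m) * θ (Fin.last m)) - k' * θ (Fin.last m) := by
        linear_combination θ (Fin.last m) * hkw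
      rw [e2]
      exact sub_mem hsum' (Ideal.mul_mem_right _ _ hk')
    have hind := IH (θ ∘ Fin.castSucc) K hreg0 _ hsum''
    have hsub : Ideal.span (Set.range (θ ∘ Fin.castSucc)) ≤ Ideal.span (Set.range θ) :=
      Ideal.span_mono (by rintro x ⟨j, rfl⟩; exact ⟨Fin.castSucc j, rfl⟩)
    have hgoal0 : K ⊔ Ideal.span (Set.range (θ ∘ Fin.castSucc)) ≤ K ⊔ Ideal.span (Set.range θ) :=
      sup_le_sup_left hsub K
    refine Fin.lastCases ?_ ?_ i
    · exact hgoal0 hu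
    · intro j
      have e : c (Fin.castSucc j) = (c (Fin.castSucc j) + r j * θ (Fin.last m)) - r j * θ (Fin.last m) := by
        ring
      rw [e]
      refine sub_mem (hgoal0 (hind j)) ?_
      exact Submodule.mem_sup_right (Ideal.mul_mem_left _ _ (Ideal.subset_span ⟨Fin.last m, rfl⟩))


open MvPolynomial

section Mono
variable {k : Type*} [CommRing k] [Nontrivial k] {σ : Type*}

theorem mem_monomialIdeal (N : σ → ℕ) (t : Finset σ) (p : MvPolynomial σ k) :
    p ∈ Ideal.span ((fun i => (X i : MvPolynomial σ k) ^ N i) '' t) ↔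
    ∀ m ∈ p.support, ∃ i ∈ t, N i ≤ m i := by
  classical
  constructor
  · intro hp
    let S : Ideal (MvPolynomial σ k) :=
      { carrier := {q | ∀ m ∈ q.support, ∃ i ∈ t, N i ≤ m i}
        zero_mem' := by simp
        add_mem' := by
          intro p q hp hq m hm
          rcases Finset.mem_union.mp (support_add hm) with h | h
          exacts [hp m h, hq m h]
        smul_mem' := by
          intro q p hp m hm
          rw [smul_eq_mul] at hm
          obtain ⟨u, hu, v, hv, rfl⟩ := Finset.mem_add.mp (support_mul q p hm)
          obtain ⟨i, hi, hNi⟩ := hp v hv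
          exact ⟨i, hi, le_trans hNi (by simp)⟩ }
    have hle : Ideal.span ((fun i => (X i : MvPolynomial σ k) ^ N i) '' t) ≤ S := by
      rw [Ideal.span_le]
      rintro x ⟨i, hi, rfl⟩
      intro m hm
      have hm' : m ∈ ((X i : MvPolynomial σ k) ^ N i).support := hm
      rw [X_pow_eq_monomial, support_monomial, if_neg one_ne_zero, Finset.mem_singleton] at hm'
      subst hm'
      exact ⟨i, hi, by simp⟩
    exact hle hp
  · intro h
    rw [← support_sum_monomial_coeff p]
    refine Ideal.sum_mem _ fun m hm => ?_
    obtain ⟨i, hi, hNi⟩ := h m hm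
    have hexp : m - Finsupp.single i (N i) + Finsupp.single i (N i) = m := by
      ext j
      by_cases hj : j = i
      · subst hj
        simp only [Finsupp.add_apply, Finsupp.tsub_apply, Finsupp.single_eq_same]
        omega
      · simp [Finsupp.single_eq_of_ne' (Ne.symm hj)]
    have e : monomial m (coeff m p) =
        monomial (m - Finsupp.single i (N i)) (coeff m p) * (X i ^ N i) := by
      rw [X_pow_eq_monomial, monomial_mul, mul_one, hexp]
    rw [e]
    exact Ideal.mul_mem_left _ _ (Ideal.subset_span ⟨i, hi, rfl⟩)

theorem seqReg_monomials (N : σ → ℕ) :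
    ∀ (l : List σ) (t : Finset σ), l.Nodup → (∀ i ∈ l, i ∉ t) →
    SeqReg (l.map fun i => (X i : MvPolynomial σ k) ^ N i)
      (Ideal.span ((fun i => (X i : MvPolynomial σ k) ^ N i) '' t)) := by
  classical
  intro l
  induction l with
  | nil => intro t _ _; trivial
  | cons j l IH =>
    intro t hnd hdisj
    refine ⟨?_, ?_⟩
    · intro u hu
      replace hu : u * ((X j : MvPolynomial σ k) ^ N j)
          ∈ Ideal.span ((fun i => (X i : MvPolynomial σ k) ^ N i) '' t) := by
        rw [mul_comm]; exact hu
      rw [mem_monomialIdeal] at hu ⊢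
      intro m hm
      have hmm : m + Finsupp.single j (N j) ∈ (u * X j ^ N j).support := by
        rw [mem_support_iff] at hm ⊢
        rw [X_pow_eq_monomial, coeff_mul_monomial]
        simpa using hm
      obtain ⟨i, hi, hNi⟩ := hu _ hmm
      have hij : i ≠ j := fun h => hdisj j (by simp) (h ▸ hi)
      refine ⟨i, hi, ?_⟩
      simpa [Finsupp.add_apply, Finsupp.single_eq_of_ne' (Ne.symm hij)] using hNi
    · have e : Ideal.span ((fun i => (X i : MvPolynomial σ k) ^ N i) '' t)
          ⊔ Ideal.span {(X j : MvPolynomial σ k) ^ N j}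
          = Ideal.span ((fun i => (X i : MvPolynomial σ k) ^ N i) '' ↑(insert j t)) := by
        rw [Finset.coe_insert, Set.image_insert_eq, Ideal.span_insert, sup_comm]
      rw [e]
      refine IH (insert j t) (List.nodup_cons.mp hnd).2 ?_
      intro i hi hmem
      rcases Finset.mem_insert.mp hmem with rfl | h
      · exact (List.nodup_cons.mp hnd).1 hi
      · exact hdisj i (List.mem_cons_of_mem _ hi) h

theorem seqReg_monomials_ofFn {n : ℕ} (N : Fin n → ℕ) :
    SeqReg (List.ofFn fun i => (X i : MvPolynomial (Fin n) k) ^ N i) ⊥ := by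
  have h := seqReg_monomials (k := k) N (List.finRange n) ∅ (List.nodup_finRange n) (by simp)
  rw [List.ofFn_eq_map]
  simpa using h

end Mono

section PropA
variable (F : Type*) [Field F] [Infinite F]
variable {R : Type*} [CommRing R] [IsNoetherianRing R] [Algebra F R]

def Phi {n : ℕ} (θ : Fin n → R) : (Fin n → F) →ₗ[F] R where
  toFun lam := ∑ i, lam i • θ i
  map_add' x y := by
    simp only [Pi.add_apply, add_smul]
    rw [Finset.sum_add_distrib]
  map_smul' c x := by
    simp only [Pi.smul_apply, smul_eq_mul, RingHom.id_apply, Finset.smul_sum, mul_smul]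

theorem Phi_single {n : ℕ} (θ : Fin n → R) (i : Fin n) : Phi F θ (Pi.single i 1) = θ i := by
  classical
  simp only [Phi, LinearMap.coe_mk, AddHom.coe_mk, Pi.single_apply, ite_smul, one_smul, zero_smul]
  rw [Finset.sum_ite_eq' (Finset.univ : Finset (Fin n)) i (fun j => θ j)]
  simp

theorem Phi_mem {n : ℕ} (θ : Fin n → R) (lam : Fin n → F) :
    Phi F θ lam ∈ Ideal.span (Set.range θ) := by
  have e : Phi F θ lam = ∑ i, lam i • θ i := rfl
  rw [e]
  refine Ideal.sum_mem _ fun i _ => ?_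
  rw [Algebra.smul_def]
  exact Ideal.mul_mem_left _ _ (Ideal.subset_span ⟨i, rfl⟩)

variable {F}

theorem propA {n : ℕ} (θ : Fin n → R)
    (rs : List R) (hrs_len : rs.length = n) (hrsI : ∀ x ∈ rs, x ∈ Ideal.span (Set.range θ))
    (hrs : SeqReg rs ⊥) :
    ∃ lam : Fin n → (Fin n → F), LinearIndependent F lam ∧
      SeqReg (List.ofFn fun j => Phi F θ (lam j)) ⊥ := by
  classical
  set I := Ideal.span (Set.range θ) with hI
  have main : ∀ k : ℕ, k ≤ n → ∃ lam : Fin k → (Fin n → F), LinearIndependent F lam ∧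
      SeqReg (List.ofFn fun j => Phi F θ (lam j)) ⊥ ∧
      ∃ rest : List R, rest.length = n - k ∧ (∀ x ∈ rest, x ∈ I) ∧
        SeqReg rest (spanL (List.ofFn fun j => Phi F θ (lam j))) := by
    intro k
    induction k with
    | zero =>
      intro _
      refine ⟨fun j => j.elim0, linearIndependent_empty_type, ?_, rs, by simp [hrs_len], hrsI, ?_⟩
      · rw [List.ofFn_zero]; trivial
      · rw [List.ofFn_zero, spanL_nil]
        exact hrs
    | succ k IH =>
      intro hk1
      obtain ⟨lam, hli, hseq, rest, hlen, hrestI, hrest⟩ := IH (le_of_lt (Nat.lt_of_succ_le hk1))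
      obtain ⟨b₀, rest', rfl⟩ : ∃ b₀ r', rest = b₀ :: r' := by
        cases rest with
        | nil => exfalso; simp at hlen; omega
        | cons x xs => exact ⟨x, xs, rfl⟩
      have hb₀ : NZDI b₀ (spanL (List.ofFn fun j => Phi F θ (lam j))) := hrest.1
      have hb₀I : b₀ ∈ I := hrestI _ (by simp)
      have hassfin := ass_finite' (R := R) (spanL (List.ofFn fun j => Phi F θ (lam j)))
      set Sp : Ideal R → Submodule F (Fin n → F) := fun p =>
        Submodule.comap (Phi F θ) (Submodule.restrictScalars F p) with hSp
      set W : Submodule F (Fin n → F) := Submodule.span F (Set.range lam) with hW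
      set FS : Finset (Submodule F (Fin n → F)) := insert W (hassfin.toFinset.image Sp) with hFS
      have htop : ⊤ ∉ FS := by
        rw [hFS]
        intro htop
        rcases Finset.mem_insert.mp htop with h | h
        · have h2 : Module.finrank F W ≤ k := by
            rw [hW]
            refine le_trans (finrank_span_le_card (Set.range lam)) ?_
            rw [Set.toFinset_range]
            exact le_trans Finset.card_image_le (by simp)
          rw [← h, finrank_top] at h2
          have h1 : Module.finrank F (Fin n → F) = n := by
            simp [Module.finrank_fintype_fun_eq_card]
          omega
        · obtain ⟨p, hp, hSpp⟩ := Finset.mem_image.mp h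
          rw [Set.Finite.mem_toFinset] at hp
          have hθp : ∀ i, θ i ∈ p := by
            intro i
            have hmem : (Pi.single i 1 : Fin n → F) ∈ Sp p := by
              rw [hSpp]; exact Submodule.mem_top
            rw [hSp] at hmem
            simpa [Phi_single] using hmem
          have hIp : I ≤ p := by
            rw [hI, Ideal.span_le]
            rintro x ⟨i, rfl⟩
            exact hθp i
          exact nzdi_notMem_ass hb₀ hp (hIp hb₀I)
      have hcover := Subspace.biUnion_ne_univ_of_top_notMem (s := FS) htop
      obtain ⟨lamNew, hlamNew⟩ := (Set.ne_univ_iff_exists_notMem _).mp hcover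
      have hlamW : lamNew ∉ W := fun h => hlamNew (Set.mem_biUnion (by
        exact Finset.mem_coe.mpr (hFS ▸ Finset.mem_insert_self W _)) h)
      have hlamSp : ∀ p ∈ associatedPrimes R (R ⧸ (spanL (List.ofFn fun j => Phi F θ (lam j)))),
          Phi F θ lamNew ∉ p := by
        intro p hp hmem
        refine hlamNew (Set.mem_biUnion (x := Sp p) ?_ hmem)
        refine Finset.mem_coe.mpr (hFS ▸ Finset.mem_insert_of_mem ?_)
        exact Finset.mem_image.mpr ⟨p, Set.Finite.mem_toFinset _ |>.mpr hp, rfl⟩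
      have hcNZ : NZDI (Phi F θ lamNew) (spanL (List.ofFn fun j => Phi F θ (lam j))) :=
        nzdi_of_forall_notMem hlamSp
      have hcI : Phi F θ lamNew ∈ I := Phi_mem F θ lamNew
      set lam' : Fin (k+1) → (Fin n → F) := Fin.snoc lam lamNew with hlam'
      have hofn : (List.ofFn fun j : Fin (k+1) => Phi F θ (lam' j))
          = (List.ofFn fun j => Phi F θ (lam j)) ++ [Phi F θ lamNew] := by
        rw [List.ofFn_succ', List.concat_eq_append]
        congr 1
        · congr 1
          funext j
          rw [hlam']
          simp
        · rw [hlam']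
          simp
      refine ⟨lam', ?_, ?_, ?_⟩
      · rw [hlam']
        exact linearIndependent_fin_snoc.mpr ⟨hli, hlamW⟩
      · rw [hofn, seqReg_append]
        refine ⟨hseq, ⟨by rwa [bot_sup_eq], trivial⟩⟩
      · obtain ⟨l', hl'len, hl'I, hl'⟩ := exchange (I := I) rest'.length
          (spanL (List.ofFn fun j => Phi F θ (lam j))) b₀ rest' rfl
          hrest hrestI (Phi F θ lamNew) hcI hcNZ
        refine ⟨l', ?_, hl'I, ?_⟩
        · rw [hl'len]
          simp only [List.length_cons] at hlen
          omega
        · rw [hofn, spanL_append, spanL_singleton]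
          exact hl'
  obtain ⟨lam, hli, hseq, _⟩ := main n le_rfl
  exact ⟨lam, hli, hseq⟩

end PropA

section KeySyzygy
variable {R : Type*} [CommRing R] [IsNoetherianRing R]

theorem key_syzygy (F : Type*) [Field F] [Infinite F] [Algebra F R] {n : ℕ} (θ : Fin n → R)
    (rs : List R) (hrs_len : rs.length = n) (hrsI : ∀ x ∈ rs, x ∈ Ideal.span (Set.range θ))
    (hrs : SeqReg rs ⊥)
    (c : Fin n → R) (hsyz : (∑ i, c i * θ i) = 0) :
    ∀ i, c i ∈ Ideal.span (Set.range θ) := by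
  classical
  rcases Nat.eq_zero_or_pos n with rfl | hn
  · intro i; exact i.elim0
  haveI : Nonempty (Fin n) := ⟨⟨0, hn⟩⟩
  obtain ⟨lam, hli, hseq⟩ := propA (F := F) θ rs hrs_len hrsI hrs
  have hB : Fintype.card (Fin n) = Module.finrank F (Fin n → F) := by
    simp [Module.finrank_fintype_fun_eq_card]
  set B := basisOfLinearIndependentOfCardEqFinrank hli hB with hBdef
  have hBcoe : ∀ j, B j = lam j := fun j => by
    rw [hBdef, coe_basisOfLinearIndependentOfCardEqFinrank]
  set μ : Fin n → Fin n → F := fun i j => B.repr (Pi.single i 1) j with hμ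
  have hrepr : ∀ i : Fin n, ∑ j, μ i j • lam j = Pi.single i 1 := by
    intro i
    conv_rhs => rw [← B.sum_repr (Pi.single i 1)]
    exact Finset.sum_congr rfl fun j _ => by rw [hBcoe]
  have hθeq : ∀ i, θ i = ∑ j, μ i j • Phi F θ (lam j) := by
    intro i
    have h1 := congrArg (Phi F θ) (hrepr i)
    rw [map_sum, Phi_single] at h1
    rw [← h1]
    exact Finset.sum_congr rfl fun j _ => by rw [map_smul]
  have hsyz' : (∑ j, (∑ i, μ i j • c i) * Phi F θ (lam j)) = 0 := by
    have e : (∑ j, (∑ i, μ i j • c i) * Phi F θ (lam j)) = ∑ i, c i * θ i := by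
      calc (∑ j, (∑ i, μ i j • c i) * Phi F θ (lam j))
          = ∑ j, ∑ i, c i * (μ i j • Phi F θ (lam j)) := by
            refine Finset.sum_congr rfl fun j _ => ?_
            rw [Finset.sum_mul]
            refine Finset.sum_congr rfl fun i _ => ?_
            rw [smul_mul_assoc, mul_smul_comm]
        _ = ∑ i, ∑ j, c i * (μ i j • Phi F θ (lam j)) := Finset.sum_comm
        _ = ∑ i, c i * θ i := by
            refine Finset.sum_congr rfl fun i _ => ?_
            rw [← Finset.mul_sum, ← hθeq]
    rw [e, hsyz]
  have hd_mem : ∀ j, (∑ i, μ i j • c i) ∈ Ideal.span (Set.range θ) := by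
    intro j
    have h0 := syzygyF n (fun j => Phi F θ (lam j)) ⊥ hseq (fun j => ∑ i, μ i j • c i)
      (by rw [hsyz']; exact Submodule.zero_mem ⊥) j
    rw [bot_sup_eq] at h0
    exact (Ideal.span_le.mpr (by rintro x ⟨j', rfl⟩; exact Phi_mem F θ (lam j'))) h0
  intro p
  have hcoord : ∀ i, (∑ j, μ i j * lam j p) = (Pi.single i 1 : Fin n → F) p := by
    intro i
    have h1 := congrFun (hrepr i) p
    rw [Finset.sum_apply] at h1
    rw [← h1]
    exact Finset.sum_congr rfl fun j _ => by simp
  have hrec : (∑ j, (lam j p) • (∑ i, μ i j • c i)) = c p := by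
    calc ∑ j, (lam j p) • (∑ i, μ i j • c i)
        = ∑ j, ∑ i, (μ i j * lam j p) • c i := by
          refine Finset.sum_congr rfl fun j _ => ?_
          rw [Finset.smul_sum]
          refine Finset.sum_congr rfl fun i _ => ?_
          rw [smul_smul, mul_comm]
      _ = ∑ i, ∑ j, (μ i j * lam j p) • c i := Finset.sum_comm
      _ = ∑ i, (∑ j, μ i j * lam j p) • c i := by
          refine Finset.sum_congr rfl fun i _ => ?_
          rw [Finset.sum_smul]
      _ = ∑ i, ((Pi.single i 1 : Fin n → F) p) • c i := by
          refine Finset.sum_congr rfl fun i _ => by rw [hcoord]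
      _ = c p := by
          rw [Finset.sum_congr rfl (fun i _ => by rw [Pi.single_apply])]
          simp only [ite_smul, one_smul, zero_smul]
          rw [Finset.sum_ite_eq (Finset.univ : Finset (Fin n)) p (fun i => c i)]
          simp
  rw [← hrec]
  exact Ideal.sum_mem _ fun j _ => by
    rw [Algebra.smul_def]
    exact Ideal.mul_mem_left _ _ (hd_mem j)

end KeySyzygy

section Star
open MvPolynomial

theorem star {s : ℕ} (θ : Fin s → MvPolynomial (Fin s) ℂ)
    (hzero : ∀ p : Fin s → ℂ, (∀ i, eval p (θ i) = 0) → p = 0)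
    (c : Fin s → MvPolynomial (Fin s) ℂ) (hsyz : (∑ i, c i * θ i) = 0) :
    ∀ i, c i ∈ Ideal.span (Set.range θ) := by
  haveI : IsNoetherianRing (MvPolynomial (Fin s) ℂ) := isNoetherianRing_fin
  have hrad : ∀ i, (X i : MvPolynomial (Fin s) ℂ) ∈ (Ideal.span (Set.range θ)).radical := by
    intro i
    rw [← vanishingIdeal_zeroLocus_eq_radical (K := ℂ), mem_vanishingIdeal_iff]
    intro x hx
    have hx' : ∀ j, eval x (θ j) = 0 := fun j => hx (θ j) (Ideal.subset_span ⟨j, rfl⟩)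
    rw [aeval_X, hzero x hx']
    simp
  have hN : ∀ i, ∃ N, (X i : MvPolynomial (Fin s) ℂ) ^ (N + 1) ∈ Ideal.span (Set.range θ) := by
    intro i
    obtain ⟨n, hn⟩ := Ideal.mem_radical_iff.mp (hrad i)
    exact ⟨n, by rw [pow_succ, mul_comm]; exact Ideal.mul_mem_left _ _ hn⟩
  choose N hNmem using hN
  refine key_syzygy ℂ θ (List.ofFn fun i => (X i : MvPolynomial (Fin s) ℂ) ^ (N i + 1))
    (by simp) ?_ ?_ c hsyz
  · intro x hx
    rw [List.mem_ofFn] at hx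
    obtain ⟨i, rfl⟩ := hx
    exact hNmem i
  · exact seqReg_monomials_ofFn _

end Star

section Grading
open MvPolynomial
variable {s : ℕ} {w : Fin s → ℕ}

theorem component_mul_homog {g r : MvPolynomial (Fin s) ℂ} {e n : ℕ}
    (hg : g.IsWeightedHomogeneous w e) (hn : n < e) :
    weightedHomogeneousComponent w n (r * g) = 0 := by
  classical
  apply MvPolynomial.ext
  intro m
  rw [coeff_weightedHomogeneousComponent, coeff_zero]
  split_ifs with h
  · rw [coeff_mul]
    refine Finset.sum_eq_zero fun uv huv => ?_
    by_cases hzero : coeff uv.2 g = 0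
    · rw [hzero, mul_zero]
    · exfalso
      have h2 := hg hzero
      have hsum : uv.1 + uv.2 = m := Finset.HasAntidiagonal.mem_antidiagonal.mp huv
      have h3 : Finsupp.weight w m = Finsupp.weight w uv.1 + Finsupp.weight w uv.2 := by
        rw [← hsum, map_add]
      omega
  · rfl

theorem component_span_eq_zero {G : Set (MvPolynomial (Fin s) ℂ)} {D : ℕ}
    (hG : ∀ g ∈ G, ∃ e, D ≤ e ∧ g.IsWeightedHomogeneous w e)
    {x : MvPolynomial (Fin s) ℂ} (hx : x ∈ Ideal.span G) {n : ℕ} (hn : n < D) :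
    weightedHomogeneousComponent w n x = 0 := by
  classical
  obtain ⟨cf, hsupp, rfl⟩ := Submodule.mem_span_set.mp hx
  rw [Finsupp.sum, map_sum]
  refine Finset.sum_eq_zero fun g hg => ?_
  obtain ⟨e, hDe, hghom⟩ := hG g (hsupp hg)
  rw [smul_eq_mul]
  exact component_mul_homog hghom (lt_of_lt_of_le hn hDe)

theorem component_of_homog_ne {p : MvPolynomial (Fin s) ℂ} {D n : ℕ}
    (hp : IsWeightedHomogeneous w p D) (hne : n ≠ D) :
    weightedHomogeneousComponent w n p = 0 := by
  classical
  apply MvPolynomial.ext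
  intro m
  rw [coeff_weightedHomogeneousComponent, coeff_zero]
  split_ifs with h
  · by_contra hc
    exact hne (h ▸ hp hc)
  · rfl

theorem isWeightedHomogeneous_pderiv {f : MvPolynomial (Fin s) ℂ} {d : ℕ}
    (hf : f.IsWeightedHomogeneous w d) (i : Fin s) :
    (pderiv i f).IsWeightedHomogeneous w (d - w i) := by
  classical
  have hrw : pderiv i f = ∑ u ∈ f.support, pderiv i (monomial u (coeff u f)) := by
    conv_lhs => rw [← support_sum_monomial_coeff f]
    rw [map_sum]
  rw [hrw]
  apply IsWeightedHomogeneous.sum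
  intro u hu
  rw [pderiv_monomial]
  by_cases h0 : u i = 0
  · rw [h0]
    simp only [Nat.cast_zero, mul_zero, map_zero]
    exact isWeightedHomogeneous_zero _ _ _
  · apply isWeightedHomogeneous_monomial
    have hud : Finsupp.weight w u = d := hf (mem_support_iff.mp hu)
    have hsplit : u - Finsupp.single i 1 + Finsupp.single i 1 = u := by
      ext j
      by_cases hj : j = i
      · subst hj
        simp only [Finsupp.add_apply, Finsupp.tsub_apply, Finsupp.single_eq_same]
        omega
      · simp [Finsupp.single_eq_of_ne' (Ne.symm hj)]
    have hw1 : Finsupp.weight w (Finsupp.single i 1) = w i := by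
      rw [Finsupp.weight_apply, Finsupp.sum_single_index]
      · simp
      · simp
    have hkey : Finsupp.weight w (u - Finsupp.single i 1) + w i = d := by
      rw [← hw1, ← map_add, hsplit, hud]
    omega

end Grading

end NegDeriv

open NegDeriv


open MvPolynomial

theorem stmt_10 (s : ℕ) (hs : 0 < s) (d : ℕ) (w : Fin s → ℕ)
    (hw : ∀ i, 0 < w i) (hmono : Antitone w) (h2 : 2 * w ⟨0, hs⟩ ≤ d)
    (f : MvPolynomial (Fin s) ℂ) (hf : f.IsWeightedHomogeneous w d)
    (hiso : ∀ p : Fin s → ℂ, (∀ i, eval p (pderiv i f) = 0) → p = 0)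
    (S : Set (MvPolynomial (Fin s) ℂ))
    (hS : ∀ g ∈ S, ∃ e, d ≤ e ∧ g.IsWeightedHomogeneous w e)
    (I : Ideal (MvPolynomial (Fin s) ℂ)) (hI : I = Ideal.span ({f} ∪ S))
    (δ : Derivation ℂ (MvPolynomial (Fin s) ℂ ⧸ I) (MvPolynomial (Fin s) ℂ ⧸ I))
    (e : ℤ) (he : e < 0)
    (hδhom : ∀ (m : ℕ) (a : MvPolynomial (Fin s) ℂ), a.IsWeightedHomogeneous w m →
      ∃ b : MvPolynomial (Fin s) ℂ,
        Ideal.Quotient.mk I b = δ (Ideal.Quotient.mk I a) ∧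
        (b = 0 ∨ ∃ m' : ℕ, (m' : ℤ) = (m : ℤ) + e ∧ b.IsWeightedHomogeneous w m')) :
    δ = 0 := by
  classical
  choose c hc1 hc2 using fun i : Fin s => hδhom (w i) (X i) (isWeightedHomogeneous_X ℂ w i)
  -- the lifted derivation
  have hsum_apply : ∀ (p : MvPolynomial (Fin s) ℂ),
      (∑ i, c i • pderiv i : Derivation ℂ (MvPolynomial (Fin s) ℂ) (MvPolynomial (Fin s) ℂ)) p
        = ∑ i, c i * pderiv i p := by
    intro p
    induction (Finset.univ : Finset (Fin s)) using Finset.induction with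
    | empty => simp
    | insert _ _ h IH =>
      rw [Finset.sum_insert h, Finset.sum_insert h, Derivation.add_apply, Derivation.smul_apply,
        IH, smul_eq_mul]
  set E : Derivation ℂ (MvPolynomial (Fin s) ℂ) (MvPolynomial (Fin s) ℂ) :=
    ∑ i, c i • pderiv i with hE
  have hEapply : ∀ p, E p = ∑ i, c i * pderiv i p := fun p => by rw [hE]; exact hsum_apply p
  set D₁ : Derivation ℂ (MvPolynomial (Fin s) ℂ) (MvPolynomial (Fin s) ℂ ⧸ I) :=
    Derivation.compAlgebraMap (MvPolynomial (Fin s) ℂ) δ with hD₁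
  have hD₁apply : ∀ p, D₁ p = δ (Ideal.Quotient.mk I p) := by
    intro p
    rw [hD₁, Derivation.compAlgebraMap_apply, Ideal.Quotient.algebraMap_eq]
  set D₂ : Derivation ℂ (MvPolynomial (Fin s) ℂ) (MvPolynomial (Fin s) ℂ ⧸ I) :=
    (Algebra.linearMap (MvPolynomial (Fin s) ℂ) (MvPolynomial (Fin s) ℂ ⧸ I)).compDer E with hD₂
  have hD₂apply : ∀ p, D₂ p = Ideal.Quotient.mk I (E p) := fun p => rfl
  have hD12 : D₁ = D₂ := by
    apply derivation_ext
    intro j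
    rw [hD₁apply, hD₂apply, ← hc1 j]
    congr 1
    rw [hEapply, Finset.sum_eq_single j]
    · rw [pderiv_X_self, mul_one]
    · intro i _ hij
      rw [pderiv_X_of_ne hij.symm, mul_zero]
    · simp
  have hkey : ∀ p, δ (Ideal.Quotient.mk I p) = Ideal.Quotient.mk I (E p) := by
    intro p
    rw [← hD₁apply, hD12, hD₂apply]
  have hwle : ∀ i, w i ≤ w ⟨0, hs⟩ := fun i => hmono (by simp [Fin.le_def])
  have hdw : ∀ i, w i ≤ d := fun i => by have := hwle i; omega
  have hfI : f ∈ I := by rw [hI]; exact Ideal.subset_span (Or.inl rfl)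
  have hEfI : E f ∈ I := by
    have h0 : Ideal.Quotient.mk I f = 0 := Ideal.Quotient.eq_zero_iff_mem.mpr hfI
    have h1 := hkey f
    rw [h0, map_zero] at h1
    exact Ideal.Quotient.eq_zero_iff_mem.mp h1.symm
  have hG : ∀ g ∈ ({f} ∪ S : Set (MvPolynomial (Fin s) ℂ)),
      ∃ e', d ≤ e' ∧ IsWeightedHomogeneous w g e' := by
    intro g hg
    rcases hg with hg | hg
    · rw [Set.mem_singleton_iff] at hg
      subst hg
      exact ⟨d, le_rfl, hf⟩
    · exact hS g hg
  have hterm : ∀ i, ∀ n : ℕ, d ≤ n →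
      weightedHomogeneousComponent w n (c i * pderiv i f) = 0 := by
    intro i n hn
    rcases hc2 i with h0 | ⟨m', hm', hhom⟩
    · rw [h0, zero_mul, map_zero]
    · have hpd := isWeightedHomogeneous_pderiv hf i
      have hprod := hhom.mul hpd
      refine component_of_homog_ne hprod ?_
      intro hcontra
      have h2' : w i ≤ d := hdw i
      omega
  have hEf0 : E f = 0 := by
    have hcomp : ∀ n, weightedHomogeneousComponent w n (E f) = 0 := by
      intro n
      rcases lt_or_ge n d with h | h
      · exact component_span_eq_zero hG (hI ▸ hEfI) h
      · rw [hEapply, map_sum]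
        exact Finset.sum_eq_zero fun i _ => hterm i n h
    have hsum := sum_weightedHomogeneousComponent w (E f)
    rw [← hsum, finsum_congr hcomp, finsum_zero]
  have hsyz : (∑ i, c i * pderiv i f) = 0 := by rw [← hEapply]; exact hEf0
  have hcJ := star (fun i => pderiv i f) hiso c hsyz
  have hGJ : ∀ g ∈ Set.range (fun i => pderiv i f),
      ∃ e', (d - w ⟨0, hs⟩) ≤ e' ∧ IsWeightedHomogeneous w g e' := by
    rintro g ⟨i, rfl⟩
    refine ⟨d - w i, ?_, isWeightedHomogeneous_pderiv hf i⟩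
    have := hwle i
    omega
  have hc0 : ∀ i, c i = 0 := by
    intro i
    rcases hc2 i with h0 | ⟨m', hm', hhom⟩
    · exact h0
    · have hlt : m' < d - w ⟨0, hs⟩ := by
        have h1 := hwle i
        have h3 := hw i
        omega
      have hcz := component_span_eq_zero hGJ (hcJ i) hlt
      rwa [hhom.weightedHomogeneousComponent_same] at hcz
  refine Derivation.ext fun x => ?_
  obtain ⟨p, rfl⟩ := Ideal.Quotient.mk_surjective x
  rw [hkey p]
  have hEp : E p = 0 := by
    rw [hEapply]
    exact Finset.sum_eq_zero fun i _ => by rw [hc0 i, zero_mul]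
  rw [hEp, map_zero, Derivation.zero_apply]
end

section
/- Let f ∈ C[x1,...,xs] be weighted homogeneous of degree d with respect to w with d ≥ 2w1 ≥ ... ≥ 2ws > 0, defining an isolated hypersurface singularity, and suppose n ≥ 2 and moreover that the ideal J_n(f) of maximal minors of the n-th Jacobian matrix is contained in J_1(f)^3 (as holds whenever s ≥ 3 or n ≥ 3, and can be checked directly for s = n = 2). Then every nonzero weighted homogeneous generator g of J_n(f) satisfies deg_w(g) ≥ d. -/
open MvPolynomial

noncomputable section

/-- Iterated partial derivative `∂^γ f / ∂x^γ` for a multi-index `γ`. -/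
def pdMulti {s : ℕ} (γ : Fin s → ℕ) (f : MvPolynomial (Fin s) ℂ) :
    MvPolynomial (Fin s) ℂ :=
  ((List.finRange s).map (fun i => fun g => (fun h => pderiv i h)^[γ i] g)).foldl
    (fun g h => h g) f

/-- The `n`-th order Jacobian matrix of `f`: rows are indexed by multi-indices `β` with
`|β| ≤ n - 1`, columns by multi-indices `α` with `1 ≤ |α| ≤ n`, and the `(β, α)`-entry is
`(1/(α-β)!) ∂^(α-β) f / ∂x^(α-β)` when `β ≤ α` componentwise and `β ≠ α`, and `0` otherwise. -/
def jacN (n s : ℕ) (f : MvPolynomial (Fin s) ℂ) :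
    Matrix {β : Fin s → Fin (n + 1) // ∑ i, (β i : ℕ) ≤ n - 1}
      {α : Fin s → Fin (n + 1) // 1 ≤ ∑ i, (α i : ℕ) ∧ ∑ i, (α i : ℕ) ≤ n}
      (MvPolynomial (Fin s) ℂ) :=
  fun β α =>
    if (∀ i, (β.1 i : ℕ) ≤ (α.1 i : ℕ)) ∧ β.1 ≠ α.1 then
      C ((∏ i, (((α.1 i : ℕ) - (β.1 i : ℕ)).factorial : ℂ)))⁻¹ *
        pdMulti (fun i => (α.1 i : ℕ) - (β.1 i : ℕ)) f
    else 0

/-- The ideal of maximal minors of the `n`-th order Jacobian matrix. -/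
def jacIdealN (n s : ℕ) (f : MvPolynomial (Fin s) ℂ) : Ideal (MvPolynomial (Fin s) ℂ) :=
  Ideal.span {g : MvPolynomial (Fin s) ℂ |
    ∃ c : {β : Fin s → Fin (n + 1) // ∑ i, (β i : ℕ) ≤ n - 1} →
        {α : Fin s → Fin (n + 1) // 1 ≤ ∑ i, (α i : ℕ) ∧ ∑ i, (α i : ℕ) ≤ n},
      Function.Injective c ∧ g = ((jacN n s f).submatrix id c).det}

/-- The ideal of polynomials all of whose monomials have weighted degree at least `k`. -/
def lowIdeal {s : ℕ} (w : Fin s → ℕ) (k : ℕ) : Ideal (MvPolynomial (Fin s) ℂ) where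
  carrier := {h | ∀ m : (Fin s →₀ ℕ), h.coeff m ≠ 0 → k ≤ Finsupp.weight w m}
  zero_mem' := by intro m hm; simp at hm
  add_mem' := by
    intro a b ha hb m hm
    by_cases h : a.coeff m = 0
    · exact hb m (by simpa [coeff_add, h] using hm)
    · exact ha m h
  smul_mem' := by
    intro c x hx m hm
    have hmem : m ∈ (c * x).support := by
      simpa [MvPolynomial.mem_support_iff] using hm
    have h2 := MvPolynomial.support_mul c x hmem
    rw [Finset.mem_add] at h2
    obtain ⟨a, _, b, hb, rfl⟩ := h2
    have hb' := hx b (by simpa [MvPolynomial.mem_support_iff] using hb)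
    simp only [map_add]
    omega

theorem lowIdeal_mul_mem {s : ℕ} {w : Fin s → ℕ} {k l : ℕ}
    {x y : MvPolynomial (Fin s) ℂ} (hx : x ∈ lowIdeal w k) (hy : y ∈ lowIdeal w l) :
    x * y ∈ lowIdeal w (k + l) := by
  intro m hm
  have hmem : m ∈ (x * y).support := by simpa [MvPolynomial.mem_support_iff] using hm
  have h2 := MvPolynomial.support_mul x y hmem
  rw [Finset.mem_add] at h2
  obtain ⟨a, ha, b, hb, rfl⟩ := h2
  have ha' := hx a (by simpa [MvPolynomial.mem_support_iff] using ha)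
  have hb' := hy b (by simpa [MvPolynomial.mem_support_iff] using hb)
  simp only [map_add]
  omega

theorem pderiv_mem_lowIdeal {s : ℕ} {w : Fin s → ℕ} {d : ℕ}
    {f : MvPolynomial (Fin s) ℂ} (hf : f.IsWeightedHomogeneous w d) (i : Fin s) :
    pderiv i f ∈ lowIdeal w (d - w i) := by
  intro m hm
  rw [f.as_sum, map_sum] at hm
  simp only [pderiv_monomial] at hm
  rw [coeff_sum] at hm
  obtain ⟨v, hv, hne⟩ := Finset.exists_ne_zero_of_sum_ne_zero hm
  rw [coeff_monomial] at hne
  split_ifs at hne with heq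
  · have hvf : coeff v f ≠ 0 := fun h => hne (by simp [h])
    have hvi : v i ≠ 0 := fun h => hne (by simp [h])
    have hd : Finsupp.weight w v = d := hf hvf
    have hle : Finsupp.single i 1 ≤ v := by
      rw [Finsupp.single_le_iff]; omega
    have hvsplit : (v - Finsupp.single i 1) + Finsupp.single i 1 = v :=
      tsub_add_cancel_of_le hle
    have hws : Finsupp.weight w (Finsupp.single i 1) = w i := by
      simp [Finsupp.weight_apply, Finsupp.sum_single_index]
    have : Finsupp.weight w (v - Finsupp.single i 1) + w i = d := by
      rw [← hws, ← map_add, hvsplit, hd]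
    rw [← heq]
    omega
  · exact absurd rfl hne

theorem stmt_11 (s : ℕ) (hs : 0 < s) (d : ℕ) (w : Fin s → ℕ)
    (hw : ∀ i, 0 < w i) (hmono : Antitone w) (h2 : 2 * w ⟨0, hs⟩ ≤ d)
    (f : MvPolynomial (Fin s) ℂ) (hf : f.IsWeightedHomogeneous w d)
    (hiso : ∀ p : Fin s → ℂ, (∀ i, eval p (pderiv i f) = 0) → p = 0)
    (n : ℕ) (hn : 2 ≤ n)
    (hsub : jacIdealN n s f ≤ (Ideal.span (Set.range fun i => pderiv i f)) ^ 3) :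
    ∀ g : MvPolynomial (Fin s) ℂ,
      (∃ c : {β : Fin s → Fin (n + 1) // ∑ i, (β i : ℕ) ≤ n - 1} →
          {α : Fin s → Fin (n + 1) // 1 ≤ ∑ i, (α i : ℕ) ∧ ∑ i, (α i : ℕ) ≤ n},
        Function.Injective c ∧ g = ((jacN n s f).submatrix id c).det) →
      g ≠ 0 → ∀ e : ℕ, g.IsWeightedHomogeneous w e → d ≤ e := by
  intro g hg hg0 e hge
  set w0 := w ⟨0, hs⟩ with hw0
  -- the Jacobian ideal of f lies in lowIdeal (d - w0)
  have hJ : Ideal.span (Set.range fun i => pderiv i f) ≤ lowIdeal w (d - w0) := by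
    rw [Ideal.span_le]
    rintro _ ⟨i, rfl⟩
    intro m hm
    have := pderiv_mem_lowIdeal hf i m hm
    have hwi : w i ≤ w0 := hmono (show (⟨0, hs⟩ : Fin s) ≤ i by
      rw [Fin.le_def]; exact Nat.zero_le _)
    omega
  -- cube it
  have hJ3 : (Ideal.span (Set.range fun i => pderiv i f)) ^ 3 ≤
      lowIdeal w ((d - w0) + (d - w0) + (d - w0)) := by
    have h1 := Ideal.pow_right_mono hJ 3
    refine le_trans h1 ?_
    have : (lowIdeal w (d - w0)) ^ 3 =
        lowIdeal w (d - w0) * lowIdeal w (d - w0) * lowIdeal w (d - w0) := by ring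
    rw [this]
    have hsq : lowIdeal w (d - w0) * lowIdeal w (d - w0) ≤
        lowIdeal w ((d - w0) + (d - w0)) :=
      Ideal.mul_le.mpr fun a ha b hb => lowIdeal_mul_mem ha hb
    refine Ideal.mul_le.mpr fun r hr t ht => ?_
    exact lowIdeal_mul_mem (hsq hr) ht
  -- g belongs to jacIdealN
  have hgmem : g ∈ jacIdealN n s f := Ideal.subset_span hg
  have hglow : g ∈ lowIdeal w ((d - w0) + (d - w0) + (d - w0)) := hJ3 (hsub hgmem)
  -- g has a nonzero coefficient
  obtain ⟨m, hm⟩ : ∃ m, g.coeff m ≠ 0 := by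
    by_contra h
    push_neg at h
    exact hg0 (MvPolynomial.ext _ _ fun m => by simp [h m])
  have h1 := hglow m hm
  have h2' : Finsupp.weight w m = e := hge hm
  have hw0pos : 0 < w0 := hw _
  omega
end
end
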